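/- Every central extension of a dihedral group D_{2n} by a cyclic group Z/mZ, given by the presentation ⟨X, Y, Z | X^n = Z^α, Y^2 = Z^β, YX = X^{n-1}YZ^γ, YZ = ZY, XZ = ZX, Z^m = 1⟩, is isomorphic to one such group where β = 0 or β = 1. -/

import Mathlib

/-- Relations for the central extension of the dihedral group `D_{2n}` by `ℤ/mℤ`
with parameters `(α, β, γ)`: generators `X = 0`, `Y = 1`, `Z = 2`. -/
def grels (n m : ℕ) (α β γ : ℤ) : Set (FreeGroup (Fin 3)) :=
  { FreeGroup.of (0 : Fin 3) ^ n * (FreeGroup.of (2 : Fin 3) ^ α)⁻¹,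
    FreeGroup.of (1 : Fin 3) ^ 2 * (FreeGroup.of (2 : Fin 3) ^ β)⁻¹,
    FreeGroup.of (1 : Fin 3) * FreeGroup.of (0 : Fin 3) *
      (FreeGroup.of (0 : Fin 3) ^ (n - 1) * FreeGroup.of (1 : Fin 3) *
        FreeGroup.of (2 : Fin 3) ^ γ)⁻¹,
    FreeGroup.of (1 : Fin 3) * FreeGroup.of (2 : Fin 3) *
      (FreeGroup.of (2 : Fin 3) * FreeGroup.of (1 : Fin 3))⁻¹,
    FreeGroup.of (0 : Fin 3) * FreeGroup.of (2 : Fin 3) *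
      (FreeGroup.of (2 : Fin 3) * FreeGroup.of (0 : Fin 3))⁻¹,
    FreeGroup.of (2 : Fin 3) ^ m }

/-- The central extension `G(α, β, γ)` of `D_{2n}` by `ℤ/mℤ`. -/
abbrev GG (n m : ℕ) (α β γ : ℤ) : Type := PresentedGroup (grels n m α β γ)

def gX (n m : ℕ) (α β γ : ℤ) : GG n m α β γ := PresentedGroup.of 0
def gY (n m : ℕ) (α β γ : ℤ) : GG n m α β γ := PresentedGroup.of 1
def gZ (n m : ℕ) (α β γ : ℤ) : GG n m α β γ := PresentedGroup.of 2

section rels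
variable (n m : ℕ) (α β γ : ℤ)

lemma rel_eq_one (r : FreeGroup (Fin 3)) (h : r ∈ grels n m α β γ) :
    PresentedGroup.mk (grels n m α β γ) r = 1 := by
  have : r ∈ Subgroup.normalClosure (grels n m α β γ) := Subgroup.subset_normalClosure h
  exact (QuotientGroup.eq_one_iff r).mpr this

lemma relX : (gX n m α β γ) ^ n = (gZ n m α β γ) ^ α := by
  have := rel_eq_one n m α β γ _ (Set.mem_insert _ _)
  simp only [map_mul, map_pow, map_zpow, map_inv, mul_inv_eq_one] at this
  exact this

lemma relY : (gY n m α β γ) ^ 2 = (gZ n m α β γ) ^ β := by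
  have := rel_eq_one n m α β γ _ (Set.mem_insert_of_mem _ (Set.mem_insert _ _))
  simp only [map_mul, map_pow, map_zpow, map_inv, mul_inv_eq_one] at this
  exact this

lemma relYX : gY n m α β γ * gX n m α β γ =
    (gX n m α β γ) ^ (n - 1) * gY n m α β γ * (gZ n m α β γ) ^ γ := by
  have := rel_eq_one n m α β γ _
    (Set.mem_insert_of_mem _ (Set.mem_insert_of_mem _ (Set.mem_insert _ _)))
  simp only [map_mul, map_pow, map_zpow, map_inv, mul_inv_eq_one] at this
  exact this

lemma relYZ : gY n m α β γ * gZ n m α β γ = gZ n m α β γ * gY n m α β γ := by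
  have := rel_eq_one n m α β γ _
    (Set.mem_insert_of_mem _ (Set.mem_insert_of_mem _ (Set.mem_insert_of_mem _
      (Set.mem_insert _ _))))
  simp only [map_mul, map_pow, map_zpow, map_inv, mul_inv_eq_one] at this
  exact this

lemma relXZ : gX n m α β γ * gZ n m α β γ = gZ n m α β γ * gX n m α β γ := by
  have := rel_eq_one n m α β γ _
    (Set.mem_insert_of_mem _ (Set.mem_insert_of_mem _ (Set.mem_insert_of_mem _
      (Set.mem_insert_of_mem _ (Set.mem_insert _ _)))))
  simp only [map_mul, map_pow, map_zpow, map_inv, mul_inv_eq_one] at this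
  exact this

lemma relZ : (gZ n m α β γ) ^ m = 1 := by
  have := rel_eq_one n m α β γ _
    (Set.mem_insert_of_mem _ (Set.mem_insert_of_mem _ (Set.mem_insert_of_mem _
      (Set.mem_insert_of_mem _ (Set.mem_insert_of_mem _ rfl)))))
  simp only [map_pow] at this
  exact this

end rels

/-- the map sending X ↦ X, Y ↦ Y Z^k, Z ↦ Z. -/
def liftFun (n m : ℕ) (α β γ k : ℤ) : Fin 3 → GG n m α β γ :=
  ![gX n m α β γ, gY n m α β γ * (gZ n m α β γ) ^ k, gZ n m α β γ]

lemma liftFun_rels (n m : ℕ) (α β₁ β₂ γ k : ℤ) (hk : β₁ = β₂ + 2 * k) :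
    ∀ r ∈ grels n m α β₁ γ, FreeGroup.lift (liftFun n m α β₂ γ k) r = 1 := by
  set x := gX n m α β₂ γ
  set y := gY n m α β₂ γ
  set z := gZ n m α β₂ γ
  have hyz : Commute y z := relYZ n m α β₂ γ
  have hxz : Commute x z := relXZ n m α β₂ γ
  have hyzk : ∀ t : ℤ, Commute y (z ^ t) := fun t => hyz.zpow_right t
  have hxzk : ∀ t : ℤ, Commute x (z ^ t) := fun t => hxz.zpow_right t
  intro r hr
  simp only [grels, Set.mem_insert_iff, Set.mem_singleton_iff] at hr
  have h0 : FreeGroup.lift (liftFun n m α β₂ γ k) (FreeGroup.of (0 : Fin 3)) = x := by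
    simp [liftFun, liftFun]; rfl
  have h1 : FreeGroup.lift (liftFun n m α β₂ γ k) (FreeGroup.of (1 : Fin 3)) = y * z ^ k := by
    simp [liftFun]; rfl
  have h2 : FreeGroup.lift (liftFun n m α β₂ γ k) (FreeGroup.of (2 : Fin 3)) = z := by
    simp [liftFun, Matrix.cons_val_two, Matrix.tail_cons, Matrix.head_cons]; rfl
  rcases hr with rfl | rfl | rfl | rfl | rfl | rfl
  · simp only [map_mul, map_pow, map_zpow, map_inv, h0, h2, mul_inv_eq_one]
    exact relX n m α β₂ γ
  · simp only [map_mul, map_pow, map_zpow, map_inv, h1, h2, mul_inv_eq_one]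
    rw [(hyzk k).mul_pow, relY, ← zpow_natCast, ← zpow_mul, ← zpow_add, hk]
    ring_nf
    rfl
  · simp only [map_mul, map_pow, map_zpow, map_inv, h0, h1, h2, mul_inv_eq_one]
    calc y * z ^ k * x = y * x * z ^ k := by rw [mul_assoc, ← (hxzk k).eq, ← mul_assoc]
    _ = x ^ (n-1) * y * z ^ γ * z ^ k := by rw [relYX]
    _ = x ^ (n-1) * (y * z ^ k) * z ^ γ := by
        simp only [mul_assoc, ← zpow_add, add_comm γ k]
  · simp only [map_mul, map_pow, map_zpow, map_inv, h1, h2, mul_inv_eq_one]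
    have hzz : z ^ k * z = z * z ^ k := ((Commute.refl z).zpow_right k).eq.symm
    calc y * z ^ k * z = y * (z * z ^ k) := by rw [mul_assoc, hzz]
      _ = y * z * z ^ k := by rw [mul_assoc]
      _ = z * y * z ^ k := by rw [hyz.eq]
      _ = z * (y * z ^ k) := by rw [mul_assoc]
  · simp only [map_mul, map_pow, map_zpow, map_inv, h0, h2, mul_inv_eq_one]
    exact relXZ n m α β₂ γ
  · simp only [map_pow, h2]
    exact relZ n m α β₂ γ

/-- the homomorphism G(α,β₁,γ) →* G(α,β₂,γ) with β₁ = β₂ + 2k. -/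
def theHom (n m : ℕ) (α β₁ β₂ γ k : ℤ) (hk : β₁ = β₂ + 2 * k) :
    GG n m α β₁ γ →* GG n m α β₂ γ :=
  PresentedGroup.toGroup (liftFun_rels n m α β₁ β₂ γ k hk)

lemma theHom_X (n m : ℕ) (α β₁ β₂ γ k : ℤ) (hk : β₁ = β₂ + 2 * k) :
    theHom n m α β₁ β₂ γ k hk (gX n m α β₁ γ) = gX n m α β₂ γ := by
  show PresentedGroup.toGroup _ (PresentedGroup.of (0 : Fin 3)) = _
  rw [PresentedGroup.toGroup.of]; rfl

lemma theHom_Y (n m : ℕ) (α β₁ β₂ γ k : ℤ) (hk : β₁ = β₂ + 2 * k) :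
    theHom n m α β₁ β₂ γ k hk (gY n m α β₁ γ) =
      gY n m α β₂ γ * (gZ n m α β₂ γ) ^ k := by
  show PresentedGroup.toGroup _ (PresentedGroup.of (1 : Fin 3)) = _
  rw [PresentedGroup.toGroup.of]; rfl

lemma theHom_Z (n m : ℕ) (α β₁ β₂ γ k : ℤ) (hk : β₁ = β₂ + 2 * k) :
    theHom n m α β₁ β₂ γ k hk (gZ n m α β₁ γ) = gZ n m α β₂ γ := by
  show PresentedGroup.toGroup _ (PresentedGroup.of (2 : Fin 3)) = _
  rw [PresentedGroup.toGroup.of]; rfl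

lemma theHom_comp (n m : ℕ) (α β₁ β₂ γ k : ℤ) (hk : β₁ = β₂ + 2 * k)
    (hk' : β₂ = β₁ + 2 * (-k)) :
    (theHom n m α β₂ β₁ γ (-k) hk').comp (theHom n m α β₁ β₂ γ k hk) =
      MonoidHom.id (GG n m α β₁ γ) := by
  apply PresentedGroup.ext
  intro i
  fin_cases i
  · show (theHom n m α β₂ β₁ γ (-k) hk') (theHom n m α β₁ β₂ γ k hk (gX n m α β₁ γ)) =
      gX n m α β₁ γ
    rw [theHom_X, theHom_X]
  · show (theHom n m α β₂ β₁ γ (-k) hk') (theHom n m α β₁ β₂ γ k hk (gY n m α β₁ γ)) =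
      gY n m α β₁ γ
    rw [theHom_Y, map_mul, map_zpow, theHom_Y, theHom_Z, mul_assoc, ← zpow_add,
      neg_add_cancel, zpow_zero, mul_one]
  · show (theHom n m α β₂ β₁ γ (-k) hk') (theHom n m α β₁ β₂ γ k hk (gZ n m α β₁ γ)) =
      gZ n m α β₁ γ
    rw [theHom_Z, theHom_Z]

/-- Every central extension `G(α, β, γ)` of `D_{2n}` by `ℤ/mℤ` is isomorphic to one
of the groups `G(α, β', γ)` with `β' = 0` or `β' = 1`. -/
theorem stmt1 (n m : ℕ) (hn : 3 ≤ n) (hm : 1 ≤ m) (α β γ : ℤ) :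
    ∃ β' : ℤ, (β' = 0 ∨ β' = 1) ∧ Nonempty (GG n m α β γ ≃* GG n m α β' γ) := by
  refine ⟨β % 2, by omega, ?_⟩
  set β' := β % 2 with hβ'
  set k := (β - β') / 2 with hkdef
  have hk : β = β' + 2 * k := by omega
  have hk' : β' = β + 2 * (-k) := by omega
  have hk'' : β = β' + 2 * (- -k) := by omega
  exact ⟨MonoidHom.toMulEquiv (theHom n m α β β' γ k hk) (theHom n m α β' β γ (-k) hk')
    (theHom_comp n m α β β' γ k hk hk')
    (by simpa using theHom_comp n m α β' β γ (-k) hk' hk'')⟩
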